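/- Let B be a Boolean algebra with more than 4 elements and let a, b ∈ B. If ↓a ∪ ↑a' = ↓b ∪ ↑b' and ↓a' ∪ ↑a = ↓b' ∪ ↑b, then a = b. That is, the map a ↦ (↓a ∪ ↑a', ↓a' ∪ ↑a) from B to pairs of subalgebras is injective. -/
import Mathlib

private lemma fin4_of_four {B : Type*} [BooleanAlgebra B] (a : B)
    (h : ∀ x : B, x = ⊥ ∨ x = ⊤ ∨ x = a ∨ x = aᶜ) :
    ∃ f : B → Fin 4, Function.Injective f := by
  classical
  refine ⟨fun x => if x = ⊥ then 0 else if x = ⊤ then 1 else if x = a then 2 else 3, ?_⟩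
  intro x y hxy
  simp only at hxy
  split_ifs at hxy <;> simp_all
  · rcases h x with hx | hx | hx | hx <;> rcases h y with hy | hy | hy | hy <;> simp_all

private lemma fin4_of_two {B : Type*} [BooleanAlgebra B]
    (h : ∀ x : B, x = ⊥ ∨ x = ⊤) :
    ∃ f : B → Fin 4, Function.Injective f :=
  fin4_of_four ⊥ fun x => (h x).imp id fun hx => Or.inl hx

-- the case b = aᶜ forces B ⊆ {⊥, ⊤, a, aᶜ}
private lemma compl_case {B : Type*} [BooleanAlgebra B] (a : B)
    (h1 : {x : B | x ≤ a ∨ aᶜ ≤ x} = {x : B | x ≤ aᶜ ∨ a ≤ x}) :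
    ∀ x : B, x = ⊥ ∨ x = ⊤ ∨ x = a ∨ x = aᶜ := by
  intro x
  have hc : x ⊓ a ≤ aᶜ ∨ a ≤ x ⊓ a :=
    (Set.ext_iff.mp h1 (x ⊓ a)).mp (Or.inl inf_le_right)
  have hd : x ⊔ a ≤ a ∨ aᶜ ≤ x ⊔ a :=
    (Set.ext_iff.mp h1 (x ⊔ a)).mpr (Or.inr le_sup_right)
  rcases hc with hc | hc
  · have hbot : x ⊓ a = ⊥ :=
      le_bot_iff.mp ((le_inf inf_le_right hc).trans_eq inf_compl_eq_bot)
    rcases hd with hd | hd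
    · left
      have hx : x ≤ a := le_sup_left.trans hd
      exact le_bot_iff.mp (by rw [← hbot]; exact le_inf le_rfl hx)
    · right; right; right
      have htop : x ⊔ a = ⊤ :=
        top_le_iff.mp ((sup_compl_eq_top (x := a)) ▸ sup_le le_sup_right hd)
      exact IsCompl.eq_compl ⟨disjoint_iff.mpr hbot, codisjoint_iff.mpr htop⟩
  · have hax : a ≤ x := hc.trans inf_le_left
    rcases hd with hd | hd
    · right; right; left
      exact le_antisymm (le_sup_left.trans hd) hax
    · right; left
      have htop : x ⊔ a = ⊤ :=
        top_le_iff.mp ((sup_compl_eq_top (x := a)) ▸ sup_le le_sup_right hd)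
      rw [← sup_eq_left.mpr hax]
      exact htop

theorem stmt4 {B : Type*} [BooleanAlgebra B]
    (hB : ¬ ∃ f : B → Fin 4, Function.Injective f) (a b : B)
    (h1 : {x : B | x ≤ a ∨ aᶜ ≤ x} = {x : B | x ≤ b ∨ bᶜ ≤ x})
    (h2 : {x : B | x ≤ aᶜ ∨ a ≤ x} = {x : B | x ≤ bᶜ ∨ b ≤ x}) :
    a = b := by
  have f1 : b ≤ a ∨ aᶜ ≤ b := (Set.ext_iff.mp h1 b).mpr (Or.inl le_rfl)
  have f2 : a ≤ b ∨ bᶜ ≤ a := (Set.ext_iff.mp h1 a).mp (Or.inl le_rfl)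
  have f3 : b ≤ aᶜ ∨ a ≤ b := (Set.ext_iff.mp h2 b).mpr (Or.inr le_rfl)
  have f4 : a ≤ bᶜ ∨ b ≤ a := (Set.ext_iff.mp h2 a).mp (Or.inr le_rfl)
  -- helper: the two-element degenerate case a = ⊤, b = ⊥ is impossible
  have deg : a = ⊤ → b = ⊥ → False := by
    intro ha hb
    subst ha; subst hb
    refine hB (fin4_of_two fun x => ?_)
    have := (Set.ext_iff.mp h1 x).mp (Or.inl le_top)
    simp only [Set.mem_setOf_eq, le_bot_iff, compl_bot, top_le_iff] at this
    exact this
  have deg' : a = ⊥ → b = ⊤ → False := by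
    intro ha hb
    subst ha; subst hb
    refine hB (fin4_of_two fun x => ?_)
    have := (Set.ext_iff.mp h1 x).mpr (Or.inl le_top)
    simp only [Set.mem_setOf_eq, le_bot_iff, compl_bot, top_le_iff] at this
    exact this
  rcases f1 with hba | hab'
  · rcases f2 with hab | hba'
    · exact le_antisymm hab hba
    · -- b ≤ a and bᶜ ≤ a : a = ⊤
      have ha : a = ⊤ := top_le_iff.mp ((sup_compl_eq_top (x := b)) ▸ sup_le hba hba')
      rcases f3 with h3 | h3
      · exact (deg ha (le_bot_iff.mp (by rw [ha, compl_top] at h3; exact h3))).elim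
      · exact le_antisymm h3 hba
  · rcases f2 with hab | hba'
    · -- aᶜ ≤ b and a ≤ b : b = ⊤
      have hb : b = ⊤ := top_le_iff.mp ((sup_compl_eq_top (x := a)) ▸ sup_le hab hab')
      rcases f4 with h4 | h4
      · exact (deg' (le_bot_iff.mp (by rw [hb, compl_top] at h4; exact h4)) hb).elim
      · exact le_antisymm hab h4
    · -- aᶜ ≤ b and bᶜ ≤ a
      rcases f3 with h3 | h3
      · -- b = aᶜ
        have hb : b = aᶜ := le_antisymm h3 hab'
        subst hb
        exact absurd (fin4_of_four a (compl_case a (by simpa using h1))) hB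
      · -- a ≤ b, with aᶜ ≤ b : b = ⊤
        have hb : b = ⊤ := top_le_iff.mp ((sup_compl_eq_top (x := a)) ▸ sup_le h3 hab')
        rcases f4 with h4 | h4
        · exact (deg' (le_bot_iff.mp (by rw [hb, compl_top] at h4; exact h4)) hb).elim
        · exact le_antisymm h3 h4
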